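/- Let g : ℝⁿ → ℝ be a continuous positively homogeneous function of degree d with g(x) > 0 for x ≠ 0, and let h : ℝⁿ → ℝ be a continuous non-negative positively homogeneous function of degree e ≥ 0. Then ∫_{{g ≤ 1}} h(x) dx = (1/Γ(1 + (n+e)/d)) ∫_{ℝⁿ} h(x) exp(-g(x)) dx, and both integrals are finite. -/

import Mathlib

open MeasureTheory
open scoped ENNReal

theorem stmt1 (n : ℕ) (hn : 1 ≤ n) (d e : ℝ) (hd : 0 < d) (he : 0 ≤ e)
    (g h : (Fin n → ℝ) → ℝ) (hgc : Continuous g) (hhc : Continuous h)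
    (hgpos : ∀ x, x ≠ 0 → 0 < g x)
    (hhnn : ∀ x, 0 ≤ h x)
    (hghom : ∀ t : ℝ, 0 < t → ∀ x, g (t • x) = t ^ d * g x)
    (hhhom : ∀ t : ℝ, 0 < t → ∀ x, h (t • x) = t ^ e * h x) :
    IntegrableOn h {x | g x ≤ 1} volume ∧
    Integrable (fun x => h x * Real.exp (-(g x))) volume ∧
    ∫ x in {x | g x ≤ 1}, h x
      = (1 / Real.Gamma (1 + ((n : ℝ) + e) / d)) *
          ∫ x, h x * Real.exp (-(g x)) := by
  classical
  have hgm : Measurable g := hgc.measurable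
  have hhm : Measurable h := hhc.measurable
  have hfin : Module.finrank ℝ (Fin n → ℝ) = n := Module.finrank_fin_fun ℝ
  haveI : NeZero n := ⟨by omega⟩
  haveI : Nontrivial (Fin n → ℝ) := by infer_instance
  -- `g 0 = 0` and `g ≥ 0`
  have hg0 : g 0 = 0 := by
    have h2 := hghom 2 two_pos 0
    rw [smul_zero] at h2
    have h2d : (1:ℝ) < 2 ^ d :=
      (Real.one_lt_rpow_iff_of_pos two_pos).2 (Or.inl ⟨one_lt_two, hd⟩)
    nlinarith
  have hgnn : ∀ x, 0 ≤ g x := by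
    intro x
    rcases eq_or_ne x 0 with rfl | hx
    · simp [hg0]
    · exact (hgpos x hx).le
  -- minimum of `g` on the unit sphere
  obtain ⟨z, hz, hzmin⟩ := (isCompact_sphere (0 : Fin n → ℝ) 1).exists_isMinOn
    (NormedSpace.sphere_nonempty.2 zero_le_one) hgc.continuousOn
  have hznorm : ‖z‖ = 1 := by simpa using hz
  have hznz : z ≠ 0 := by
    intro h0; rw [h0, norm_zero] at hznorm; norm_num at hznorm
  set m := g z with hm_def
  have hm : 0 < m := hgpos z hznz
  -- coercivity bound
  have hbound : ∀ x : Fin n → ℝ, g x ≤ 1 → ‖x‖ ≤ m⁻¹ ^ d⁻¹ := by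
    intro x hx
    rcases eq_or_ne x 0 with rfl | hx0
    · simpa using Real.rpow_nonneg (inv_nonneg.2 hm.le) d⁻¹
    · have hr : 0 < ‖x‖ := norm_pos_iff.2 hx0
      have hy : (‖x‖⁻¹ • x) ∈ Metric.sphere (0 : Fin n → ℝ) 1 := by
        simp [norm_smul, abs_of_pos (inv_pos.2 hr), inv_mul_cancel₀ hr.ne']
      have h1 : m ≤ g (‖x‖⁻¹ • x) := hzmin hy
      have h2 : g x = ‖x‖ ^ d * g (‖x‖⁻¹ • x) := by
        have := hghom ‖x‖ hr (‖x‖⁻¹ • x)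
        rw [smul_smul, mul_inv_cancel₀ hr.ne', one_smul] at this
        exact this
      have hrd : 0 < ‖x‖ ^ d := Real.rpow_pos_of_pos hr d
      have h3 : ‖x‖ ^ d * m ≤ 1 := by nlinarith
      have h4 : ‖x‖ ^ d ≤ m⁻¹ := by
        rw [← one_div]
        exact (le_div_iff₀ hm).2 h3
      calc ‖x‖ = (‖x‖ ^ d) ^ d⁻¹ := by
            rw [← Real.rpow_mul (norm_nonneg x), mul_inv_cancel₀ hd.ne', Real.rpow_one]
        _ ≤ m⁻¹ ^ d⁻¹ :=
            Real.rpow_le_rpow hrd.le h4 (inv_nonneg.2 hd.le)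
  have hKc : IsCompact {x : Fin n → ℝ | g x ≤ 1} := by
    refine Metric.isCompact_of_isClosed_isBounded (isClosed_le hgc continuous_const) ?_
    refine (Metric.isBounded_closedBall (x := (0 : Fin n → ℝ)) (r := m⁻¹ ^ d⁻¹)).subset ?_
    intro x hx
    simpa [Metric.mem_closedBall, dist_eq_norm] using hbound x hx
  have hmeasK : MeasurableSet {x : Fin n → ℝ | g x ≤ 1} :=
    (isClosed_le hgc continuous_const).measurableSet
  have claim1 : IntegrableOn h {x : Fin n → ℝ | g x ≤ 1} volume :=
    hhc.continuousOn.integrableOn_compact hKc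
  -- notation
  set p := ((n : ℝ) + e) / d with hp_def
  have hp : 0 < p := by
    have h1 : (1:ℝ) ≤ (n:ℝ) := by exact_mod_cast hn
    exact div_pos (by linarith) hd
  have hΓpos : 0 < Real.Gamma (1 + p) := Real.Gamma_pos_of_pos (by linarith)
  set F : (Fin n → ℝ) → ℝ≥0∞ := fun x => ENNReal.ofReal (h x) with hF_def
  have hFm : Measurable F := ENNReal.measurable_ofReal.comp hhm
  set I' : ℝ≥0∞ := ∫⁻ x in {x : Fin n → ℝ | g x ≤ 1}, F x with hI'_def
  have hI'_eq : I' = ENNReal.ofReal (∫ x in {x : Fin n → ℝ | g x ≤ 1}, h x) := by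
    rw [hI'_def, ofReal_integral_eq_lintegral_ofReal claim1
      (Filter.Eventually.of_forall fun x => hhnn x)]
  have hI'_ne_top : I' ≠ ⊤ := by rw [hI'_eq]; exact ENNReal.ofReal_ne_top
  -- scaling lemma
  have scale : ∀ s : ℝ, 0 < s →
      ∫⁻ x in {x : Fin n → ℝ | g x ≤ s}, F x = ENNReal.ofReal (s ^ p) * I' := by
    intro s hs
    set c := s ^ d⁻¹ with hc_def
    have hc0 : 0 < c := Real.rpow_pos_of_pos hs _
    have hcd : c ^ d = s := by
      rw [hc_def, ← Real.rpow_mul hs.le, inv_mul_cancel₀ hd.ne', Real.rpow_one]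
    have hmeas_s : MeasurableSet {x : Fin n → ℝ | g x ≤ s} :=
      (isClosed_le hgc continuous_const).measurableSet
    have hmap := Measure.map_addHaar_smul (volume : Measure (Fin n → ℝ)) hc0.ne'
    have key : ∫⁻ x, {x : Fin n → ℝ | g x ≤ s}.indicator F (c • x) ∂volume
        = ENNReal.ofReal ((c ^ n : ℝ))⁻¹ * ∫⁻ x, {x : Fin n → ℝ | g x ≤ s}.indicator F x ∂volume := by
      rw [← lintegral_map (hFm.indicator hmeas_s) (measurable_const_smul c), hmap, hfin]
      rw [lintegral_smul_measure]
      congr 1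
      rw [abs_of_nonneg (by positivity)]
    have hpt : ∀ x, {x : Fin n → ℝ | g x ≤ s}.indicator F (c • x)
        = ENNReal.ofReal (c ^ e) * {x : Fin n → ℝ | g x ≤ 1}.indicator F x := by
      intro x
      have hmem : g (c • x) ≤ s ↔ g x ≤ 1 := by
        rw [hghom c hc0 x, hcd, mul_le_iff_le_one_right hs]
      by_cases hx : g x ≤ 1
      · rw [Set.indicator_of_mem (by exact hmem.2 hx), Set.indicator_of_mem (by exact hx),
          hF_def]
        simp only
        rw [hhhom c hc0 x, ENNReal.ofReal_mul (Real.rpow_nonneg hc0.le e)]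
      · rw [Set.indicator_of_notMem (by simpa [Set.mem_setOf_eq, hmem] using hx),
          Set.indicator_of_notMem (by exact hx), mul_zero]
    have key2 : ENNReal.ofReal (c ^ e) * I'
        = ENNReal.ofReal ((c ^ n : ℝ))⁻¹ * ∫⁻ x in {x : Fin n → ℝ | g x ≤ s}, F x := by
      rw [← lintegral_indicator hmeas_s, ← key]
      rw [show (fun x => {x : Fin n → ℝ | g x ≤ s}.indicator F (c • x))
          = fun x => ENNReal.ofReal (c ^ e) * {x : Fin n → ℝ | g x ≤ 1}.indicator F x
          from funext hpt]
      rw [lintegral_const_mul _ (hFm.indicator hmeasK), lintegral_indicator hmeasK]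
    have hcn : (0:ℝ) < c ^ n := by positivity
    have hone : ENNReal.ofReal (c ^ n) * ENNReal.ofReal ((c ^ n : ℝ))⁻¹ = 1 := by
      rw [← ENNReal.ofReal_mul hcn.le, mul_inv_cancel₀ hcn.ne', ENNReal.ofReal_one]
    have key3 : ∫⁻ x in {x : Fin n → ℝ | g x ≤ s}, F x
        = ENNReal.ofReal (c ^ n) * ENNReal.ofReal (c ^ e) * I' := by
      rw [mul_assoc, key2, ← mul_assoc, hone, one_mul]
    rw [key3]
    congr 2
    rw [← ENNReal.ofReal_mul (by positivity)]
    congr 1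
    rw [← Real.rpow_natCast c n, ← Real.rpow_add hc0, hc_def, ← Real.rpow_mul hs.le,
      hp_def]
    congr 1
    field_simp
  -- layer-cake identity for the exponential
  have layer : ∀ a : ℝ, 0 ≤ a →
      ∫⁻ s in Set.Ioi (0:ℝ), (Set.Ici a).indicator (fun s => ENNReal.ofReal (Real.exp (-s))) s
        = ENNReal.ofReal (Real.exp (-a)) := by
    intro a ha
    rw [lintegral_indicator measurableSet_Ici, Measure.restrict_restrict measurableSet_Ici]
    have hae : (Set.Ici a ∩ Set.Ioi 0 : Set ℝ) =ᵐ[volume] Set.Ioi a := by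
      rw [MeasureTheory.ae_eq_set]
      constructor
      · refine measure_mono_null (fun x hx => ?_) (measure_singleton a)
        rcases hx with ⟨⟨hx1, _⟩, hx2⟩
        simp only [Set.mem_Ioi, not_lt] at hx2
        exact le_antisymm (by exact hx2) hx1
      · refine measure_mono_null (fun x hx => ?_) (measure_empty (μ := volume))
        rcases hx with ⟨hx1, hx2⟩
        exact absurd ⟨Set.mem_Ici.2 (le_of_lt (Set.mem_Ioi.1 hx1)),
          Set.mem_Ioi.2 (lt_of_le_of_lt ha (Set.mem_Ioi.1 hx1))⟩ hx2
    rw [setLIntegral_congr hae]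
    rw [← ofReal_integral_eq_lintegral_ofReal]
    · rw [integral_exp_neg_Ioi]
    · have := exp_neg_integrableOn_Ioi a (b := 1) one_pos
      simpa [IntegrableOn] using this
    · exact Filter.Eventually.of_forall fun x => (Real.exp_pos _).le
  -- the double integral
  set f : (Fin n → ℝ) → ℝ → ℝ≥0∞ := fun x s =>
    ENNReal.ofReal (h x) * (Set.Ici (g x)).indicator (fun s => ENNReal.ofReal (Real.exp (-s))) s
    with hf_def
  have hset_pair : MeasurableSet {q : (Fin n → ℝ) × ℝ | g q.1 ≤ q.2} :=
    (isClosed_le (hgc.comp continuous_fst) continuous_snd).measurableSet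
  have hfm : Measurable (Function.uncurry f) := by
    have huncurry : Function.uncurry f = fun q : (Fin n → ℝ) × ℝ =>
        ENNReal.ofReal (h q.1) *
          ({q : (Fin n → ℝ) × ℝ | g q.1 ≤ q.2}).indicator
            (fun q => ENNReal.ofReal (Real.exp (-q.2))) q := by
      funext q
      simp [hf_def, Function.uncurry, Set.indicator_apply, Set.mem_Ici, Set.mem_setOf_eq]
    rw [huncurry]
    exact (ENNReal.measurable_ofReal.comp (hhm.comp measurable_fst)).mul
      (((ENNReal.measurable_ofReal.comp
        ((Real.measurable_exp.comp measurable_snd.neg)))).indicator hset_pair)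
  have step1 : ∀ x, ∫⁻ s in Set.Ioi (0:ℝ), f x s
      = ENNReal.ofReal (h x * Real.exp (-(g x))) := by
    intro x
    rw [hf_def]
    simp only
    rw [lintegral_const_mul' _ _ ENNReal.ofReal_ne_top, layer (g x) (hgnn x),
      ← ENNReal.ofReal_mul (hhnn x)]
  have step2 : ∀ s : ℝ, 0 < s → ∫⁻ x, f x s ∂volume
      = ENNReal.ofReal (Real.exp (-s) * s ^ p) * I' := by
    intro s hs
    have hpt : ∀ x, f x s = {x : Fin n → ℝ | g x ≤ s}.indicator
        (fun x => ENNReal.ofReal (Real.exp (-s)) * F x) x := by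
      intro x
      by_cases hx : g x ≤ s
      · rw [Set.indicator_of_mem (by exact hx), hf_def]
        simp only
        rw [Set.indicator_of_mem (by exact hx), mul_comm]
      · rw [Set.indicator_of_notMem (by exact hx), hf_def]
        simp only
        rw [Set.indicator_of_notMem (by exact hx), mul_zero]
    rw [show (fun x => f x s) = _ from funext hpt,
      lintegral_indicator (isClosed_le hgc continuous_const).measurableSet,
      lintegral_const_mul' _ _ ENNReal.ofReal_ne_top, scale s hs, ← mul_assoc,
      ← ENNReal.ofReal_mul (Real.exp_pos _).le]
  have swap : ∫⁻ x, ∫⁻ s in Set.Ioi (0:ℝ), f x s ∂volume ∂volume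
      = ∫⁻ s in Set.Ioi (0:ℝ), ∫⁻ x, f x s ∂volume ∂volume :=
    lintegral_lintegral_swap hfm.aemeasurable
  have gamma_lint : ∫⁻ s in Set.Ioi (0:ℝ), ENNReal.ofReal (Real.exp (-s) * s ^ p) ∂volume
      = ENNReal.ofReal (Real.Gamma (1 + p)) := by
    have hint : IntegrableOn (fun s : ℝ => Real.exp (-s) * s ^ p) (Set.Ioi 0) volume := by
      have := Real.GammaIntegral_convergent (show (0:ℝ) < 1 + p by linarith)
      simpa [add_sub_cancel_left] using this
    have hnnae : (0:ℝ → ℝ) ≤ᵐ[volume.restrict (Set.Ioi 0)]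
        fun s => Real.exp (-s) * s ^ p := by
      filter_upwards [ae_restrict_mem measurableSet_Ioi] with s hs
      have : (0:ℝ) < s := hs
      positivity
    rw [← ofReal_integral_eq_lintegral_ofReal hint hnnae]
    congr 1
    rw [Real.Gamma_eq_integral (by linarith : (0:ℝ) < 1 + p), add_sub_cancel_left]
  have J'calc : ∫⁻ x, ENNReal.ofReal (h x * Real.exp (-(g x))) ∂volume
      = ENNReal.ofReal (Real.Gamma (1 + p)) * I' := by
    rw [show (fun x => ENNReal.ofReal (h x * Real.exp (-(g x))))
        = fun x => ∫⁻ s in Set.Ioi (0:ℝ), f x s from funext fun x => (step1 x).symm]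
    rw [swap]
    rw [setLIntegral_congr_fun measurableSet_Ioi
      (fun s hs => step2 s hs)]
    rw [lintegral_mul_const' I' _ hI'_ne_top, gamma_lint]
  have hnn_ae : (0:(Fin n → ℝ) → ℝ) ≤ᵐ[volume] fun x => h x * Real.exp (-(g x)) :=
    Filter.Eventually.of_forall fun x => mul_nonneg (hhnn x) (Real.exp_pos _).le
  have claim2 : Integrable (fun x => h x * Real.exp (-(g x))) volume := by
    refine ⟨(hhc.mul (Real.continuous_exp.comp hgc.neg)).aestronglyMeasurable, ?_⟩
    rw [hasFiniteIntegral_iff_ofReal hnn_ae, J'calc]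
    exact ENNReal.mul_lt_top ENNReal.ofReal_lt_top hI'_ne_top.lt_top
  have claim3 : ∫ x, h x * Real.exp (-(g x))
      = Real.Gamma (1 + p) * ∫ x in {x : Fin n → ℝ | g x ≤ 1}, h x := by
    rw [integral_eq_lintegral_of_nonneg_ae hnn_ae
      (hhc.mul (Real.continuous_exp.comp hgc.neg)).aestronglyMeasurable, J'calc, hI'_eq,
      ← ENNReal.ofReal_mul hΓpos.le, ENNReal.toReal_ofReal]
    exact mul_nonneg hΓpos.le (setIntegral_nonneg hmeasK fun x _ => hhnn x)
  refine ⟨claim1, claim2, ?_⟩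
  rw [claim3, ← mul_assoc, one_div, inv_mul_cancel₀ hΓpos.ne', one_mul]
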